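/- A clause represented as a ground list f of pairs is true under an assignment represented by a substitution θ iff fθ ∈ L₁; consequently, a CNF formula represented as a list t of such clause representations is satisfiable iff t has a ground instance in L₂. Moreover, for any set L₂' with L₂⁰ ⊆ L₂' ⊆ L₂, t is satisfiable iff t has a ground instance in L₂', where L₂⁰ is the set of lists of elements of L₁⁰ and L₁⁰ = { [t₁-u₁,…,tₙ-uₙ] : n > 0, all tᵢ, uᵢ ground, tⱼ = uⱼ for some j }. -/

import Mathlib

/-- A rule (ground instance of a program clause): a head atom and a list of body atoms. -/
structure GroundRule (α : Type) where
  head : α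
  body : List α

/-- The least Herbrand model of a (ground) definite program `P`: the least set of
ground atoms closed under the immediate consequence operator. -/
inductive LHM {α : Type} (P : Set (GroundRule α)) : α → Prop where
  | intro (r : GroundRule α) (hr : r ∈ P) (hb : ∀ b ∈ r.body, LHM P b) : LHM P r.head

/-- Ground terms over an alphabet with the list constructors `[]` and cons, the binary
pairing symbol `-`, the constants `true` and `false`, and infinitely many other
function symbols of each arity (`fn k [t₁,…,tₙ]` is the `k`-th other symbol of arity `n`). -/
inductive Tm : Type where
  | nil : Tm
  | cons : Tm → Tm → Tm
  | pair : Tm → Tm → Tm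
  | tt : Tm
  | ff : Tm
  | fn : ℕ → List Tm → Tm

/-- Ground atoms for the predicates used in the paper's programs. -/
inductive Atom : Type where
  | sat_cnf : Tm → Atom
  | sat_cl : Tm → Atom
  | eq : Tm → Tm → Atom
  | sat_cl3 : Tm → Tm → Tm → Atom
  | sat_cl5 : Tm → Tm → Tm → Tm → Tm → Atom
  | sat_cl5a : Tm → Tm → Tm → Tm → Tm → Atom
  | sat : Tm → Tm → Atom
  | tflist : Tm → Atom
  | tf : Tm → Atom

/-- `L₁`: ground terms of the form `[t₁,…,tₙ|s]`, `n > 0`, where some `tᵢ` is `t-t`. -/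
inductive L1 : Tm → Prop where
  | here (u s : Tm) : L1 (.cons (.pair u u) s)
  | there (t s : Tm) : L1 s → L1 (.cons t s)

/-- `L₂`: ground lists all of whose elements are in `L₁`. -/
inductive L2 : Tm → Prop where
  | nil : L2 .nil
  | cons (h t : Tm) : L1 h → L2 t → L2 (.cons h t)

/-- Ground lists all of whose elements are pairs `t-u`. -/
inductive PairList : Tm → Prop where
  | nil : PairList .nil
  | cons (t u s : Tm) : PairList s → PairList (.cons (.pair t u) s)

/-- `L₁⁰`: ground lists `[t₁-u₁,…,tₙ-uₙ]`, `n > 0`, with `tⱼ = uⱼ` for some `j`. -/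
inductive L1o : Tm → Prop where
  | here (u s : Tm) : PairList s → L1o (.cons (.pair u u) s)
  | there (t u s : Tm) : L1o s → L1o (.cons (.pair t u) s)

/-- `L₂⁰`: ground lists all of whose elements are in `L₁⁰`. -/
inductive L2o : Tm → Prop where
  | nil : L2o .nil
  | cons (h t : Tm) : L1o h → L2o t → L2o (.cons h t)

/-- Terms possibly containing variables (over the same alphabet, without the
`other` function symbols, which do not occur in representations of formulae). -/
inductive TmV : Type where
  | var : ℕ → TmV
  | nil : TmV
  | cons : TmV → TmV → TmV
  | pair : TmV → TmV → TmV
  | tt : TmV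
  | ff : TmV

/-- Applying a (ground) substitution to a term. -/
def subst (θ : ℕ → Tm) : TmV → Tm
  | .var x => θ x
  | .nil => .nil
  | .cons h t => .cons (subst θ h) (subst θ t)
  | .pair a b => .pair (subst θ a) (subst θ b)
  | .tt => .tt
  | .ff => .ff

/-- The constant representing a truth value. -/
def boolTm (b : Bool) : Tm := if b then .tt else .ff

/-- Ditto, as a term with variables. -/
def boolTmV (b : Bool) : TmV := if b then .tt else .ff

/-- A propositional literal `(b, x)` (polarity `b`, variable `x`) is represented
as the pair `b-X`. -/
def repLit (l : Bool × ℕ) : TmV := .pair (boolTmV l.1) (.var l.2)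

/-- A propositional clause is represented as the list of representations of its literals. -/
def repClause (c : List (Bool × ℕ)) : TmV :=
  c.foldr (fun l t => .cons (repLit l) t) .nil

/-- A CNF formula is represented as the list of representations of its clauses. -/
def repCNF (F : List (List (Bool × ℕ))) : TmV :=
  F.foldr (fun c t => .cons (repClause c) t) .nil

/-- A clause is true under an assignment iff some of its literals has the assigned value. -/
def clauseTrue (σ : ℕ → Bool) (c : List (Bool × ℕ)) : Prop :=
  ∃ l ∈ c, σ l.2 = l.1

/-- A CNF formula is satisfiable iff some assignment makes all its clauses true. -/
def satisfiable (F : List (List (Bool × ℕ))) : Prop :=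
  ∃ σ : ℕ → Bool, ∀ c ∈ F, clauseTrue σ c

lemma L1_cons_inv {a s : Tm} (h : L1 (.cons a s)) : (∃ u, a = .pair u u) ∨ L1 s := by
  cases h with
  | here u s => exact Or.inl ⟨u, rfl⟩
  | there t s h => exact Or.inr h

lemma subst_boolTmV (θ : ℕ → Tm) (b : Bool) : subst θ (boolTmV b) = boolTm b := by
  cases b <;> rfl

lemma clause_iff (σ : ℕ → Bool) (c : List (Bool × ℕ)) :
    clauseTrue σ c ↔ L1 (subst (fun x => boolTm (σ x)) (repClause c)) := by
  induction c with
  | nil =>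
    constructor
    · rintro ⟨l, h, -⟩; exact absurd h (by simp)
    · intro h; cases h
  | cons l c ih =>
    constructor
    · rintro ⟨m, hm, hv⟩
      rcases List.mem_cons.mp hm with hm | hm
      · subst hm
        show L1 (.cons (.pair (subst _ (boolTmV m.1)) (boolTm (σ m.2))) _)
        rw [subst_boolTmV, ← hv]
        exact L1.here _ _
      · exact L1.there _ _ (ih.mp ⟨m, hm, hv⟩)
    · intro h
      have h' : L1 (.cons (.pair (subst (fun x => boolTm (σ x)) (boolTmV l.1))
          (boolTm (σ l.2))) (subst (fun x => boolTm (σ x)) (repClause c))) := h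
      rcases L1_cons_inv h' with ⟨u, hu⟩ | h2
      · refine ⟨l, List.mem_cons_self, ?_⟩
        rw [subst_boolTmV] at hu
        have : boolTm l.1 = boolTm (σ l.2) := by
          injection hu with h1 h2; rw [h1, h2]
        cases hb : l.1 <;> cases hs : σ l.2 <;> simp_all [boolTm] <;> exact Tm.noConfusion (hu.1.trans hu.2.symm)
      · obtain ⟨m, hm, hv⟩ := ih.mpr h2
        exact ⟨m, List.mem_cons_of_mem _ hm, hv⟩

lemma pairList_clause (θ : ℕ → Tm) (c : List (Bool × ℕ)) :
    PairList (subst θ (repClause c)) := by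
  induction c with
  | nil => exact PairList.nil
  | cons l c ih => exact PairList.cons _ _ _ ih

lemma clause_L1o (σ : ℕ → Bool) (c : List (Bool × ℕ)) (h : clauseTrue σ c) :
    L1o (subst (fun x => boolTm (σ x)) (repClause c)) := by
  induction c with
  | nil => obtain ⟨l, hl, -⟩ := h; exact absurd hl (by simp)
  | cons l c ih =>
    obtain ⟨m, hm, hv⟩ := h
    rcases List.mem_cons.mp hm with hm | hm
    · subst hm
      show L1o (.cons (.pair (subst _ (boolTmV m.1)) (boolTm (σ m.2))) _)
      rw [subst_boolTmV, ← hv]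
      exact L1o.here _ _ (pairList_clause _ _)
    · exact L1o.there _ _ _ (ih ⟨m, hm, hv⟩)

lemma L1_clause_witness (θ : ℕ → Tm) (c : List (Bool × ℕ))
    (h : L1 (subst θ (repClause c))) : ∃ l ∈ c, θ l.2 = boolTm l.1 := by
  induction c with
  | nil => cases h
  | cons l c ih =>
    have h' : L1 (.cons (.pair (subst θ (boolTmV l.1)) (θ l.2))
        (subst θ (repClause c))) := h
    rcases L1_cons_inv h' with ⟨u, hu⟩ | h2
    · refine ⟨l, List.mem_cons_self, ?_⟩
      rw [subst_boolTmV] at hu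
      injection hu with h1 h2; rw [h2, ← h1]
    · obtain ⟨m, hm, hv⟩ := ih h2
      exact ⟨m, List.mem_cons_of_mem _ hm, hv⟩

lemma L2_cons_inv {a s : Tm} (h : L2 (.cons a s)) : L1 a ∧ L2 s := by
  cases h with
  | cons h t h1 h2 => exact ⟨h1, h2⟩

/-- A represented clause is true under an assignment (represented by a substitution `θ`)
iff its instance under `θ` is in `L₁`; consequently a CNF formula is satisfiable iff its
representation has a ground instance in `L₂`; moreover for any `L₂'` with
`L₂⁰ ⊆ L₂' ⊆ L₂`, it is satisfiable iff its representation has a ground instance in `L₂'`. -/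
theorem satisfiability_via_L2 :
    (∀ (σ : ℕ → Bool) (c : List (Bool × ℕ)),
        clauseTrue σ c ↔ L1 (subst (fun x => boolTm (σ x)) (repClause c))) ∧
    (∀ F : List (List (Bool × ℕ)),
        satisfiable F ↔ ∃ θ : ℕ → Tm, L2 (subst θ (repCNF F))) ∧
    (∀ L2' : Set Tm, (∀ t, L2o t → t ∈ L2') → (∀ t ∈ L2', L2 t) →
        ∀ F : List (List (Bool × ℕ)),
          satisfiable F ↔ ∃ θ : ℕ → Tm, subst θ (repCNF F) ∈ L2') := by
  have key : ∀ (θ : ℕ → Tm) (F : List (List (Bool × ℕ))),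
      L2 (subst θ (repCNF F)) → satisfiable F := by
    intro θ F h
    refine ⟨fun x => match θ x with | .tt => true | _ => false, ?_⟩
    induction F with
    | nil => intro c hc; exact absurd hc (by simp)
    | cons c' F ih =>
      have h' : L2 (.cons (subst θ (repClause c')) (subst θ (repCNF F))) := h
      obtain ⟨h1, h2⟩ := L2_cons_inv h'
      intro c hc
      rcases List.mem_cons.mp hc with hc | hc
      · subst hc
        obtain ⟨l, hl, hv⟩ := L1_clause_witness θ c h1
        refine ⟨l, hl, ?_⟩
        cases hb : l.1 <;> simp_all [boolTm]
      · exact ih h2 c hc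
  refine ⟨clause_iff, ?_, ?_⟩
  · intro F
    constructor
    · rintro ⟨σ, hσ⟩
      refine ⟨fun x => boolTm (σ x), ?_⟩
      induction F with
      | nil => exact L2.nil
      | cons c F ih =>
        exact L2.cons _ _ ((clause_iff σ c).mp (hσ c (List.mem_cons_self)))
          (ih fun c hc => hσ c (List.mem_cons_of_mem _ hc))
    · rintro ⟨θ, h⟩; exact key θ F h
  · intro L2' hlo hhi F
    constructor
    · rintro ⟨σ, hσ⟩
      refine ⟨fun x => boolTm (σ x), hlo _ ?_⟩
      induction F with
      | nil => exact L2o.nil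
      | cons c F ih =>
        exact L2o.cons _ _ (clause_L1o σ c (hσ c (List.mem_cons_self)))
          (ih fun c hc => hσ c (List.mem_cons_of_mem _ hc))
    · rintro ⟨θ, h⟩; exact key θ F (hhi _ h)
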